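/- Let g > 0, let H0 > 0, l > H0 and d ≠ 0 be real parameters, and set c0 := (l/d) √( g H0³ / (l² − H0²) ) and a := c0² d² / (g l²). Define sech(X) := 1/cosh(X) and, writing ξ := (x − c0 t)/l: H(x,t) := H0 + a sech(ξ)², u(x,t) := c0 (1 − d/H(x,t)), w(x,t) := −(a c0 d /(l H(x,t))) sech(ξ) sech'(ξ), and p(x,t) := (a c0² d² /(2 l² H(x,t)²)) ( (2 H0 − H(x,t)) (sech'(ξ))² + H(x,t) sech(ξ) sech''(ξ) ). Then (H, u, w, p), together with a constant bottom zb, is a solitary-wave solution of the non-hydrostatic depth-averaged model, i.e. it satisfies (E1) ∂t H + ∂x (H u) = 0; (E2) ∂t (H u) + ∂x (H u² + (g/2) H² + H p) = 0; (E3) ∂t (H w) + ∂x (H u w) = 2 p; (E4) ∂t ((η² − zb²)/2) + ∂x (((η² − zb²)/2) u) = H w, where η := H + zb, at every point (x,t). -/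

import Mathlib

/-- Partial derivative in the space variable `x` of a function of `(x, t)`. -/
noncomputable def pdX (F : ℝ → ℝ → ℝ) (x t : ℝ) : ℝ := deriv (fun y => F y t) x

/-- Partial derivative in the time variable `t` of a function of `(x, t)`. -/
noncomputable def pdT (F : ℝ → ℝ → ℝ) (x t : ℝ) : ℝ := deriv (fun s => F x s) t

/-- The hyperbolic secant. -/
noncomputable def sech (X : ℝ) : ℝ := 1 / Real.cosh X

lemma cosh_ne (X : ℝ) : Real.cosh X ≠ 0 := (Real.cosh_pos X).ne'

lemma sech_sq (X : ℝ) : sech X ^ 2 = (Real.cosh X ^ 2)⁻¹ := by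
  rw [sech, div_pow, one_pow, one_div]

lemma sech_eq (X : ℝ) : sech X = (Real.cosh X)⁻¹ := by rw [sech, one_div]

lemma hasDerivAt_sech (X : ℝ) : HasDerivAt sech (-Real.sinh X / Real.cosh X ^ 2) X := by
  have hs : sech = fun Y => (Real.cosh Y)⁻¹ := by funext Y; rw [sech, one_div]
  rw [hs]
  exact (Real.hasDerivAt_cosh X).inv (cosh_ne X)

lemma deriv_sech (X : ℝ) : deriv sech X = -Real.sinh X / Real.cosh X ^ 2 :=
  (hasDerivAt_sech X).deriv

lemma deriv2_sech (X : ℝ) :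
    deriv (deriv sech) X = (2 * Real.sinh X ^ 2 - Real.cosh X ^ 2) / Real.cosh X ^ 3 := by
  have hf : deriv sech = fun Y => -Real.sinh Y / Real.cosh Y ^ 2 := funext deriv_sech
  rw [hf]
  have h := ((Real.hasDerivAt_sinh X).neg.div ((Real.hasDerivAt_cosh X).pow 2)
    (pow_ne_zero 2 (cosh_ne X)))
  rw [show (fun Y => -Real.sinh Y / Real.cosh Y ^ 2) = (-Real.sinh / Real.cosh ^ 2) from rfl,
    h.deriv]
  have hc := cosh_ne X
  simp only [Pi.pow_apply, Pi.neg_apply, Pi.add_apply, Pi.div_apply]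
  field_simp
  ring

lemma hF_H (H0 a : ℝ) (X : ℝ) :
    HasDerivAt (fun Y => H0 + a * (Real.cosh Y ^ 2)⁻¹)
      (-(2 * a * Real.sinh X) / Real.cosh X ^ 3) X := by
  have h := ((((Real.hasDerivAt_cosh X).pow 2).inv
    (pow_ne_zero 2 (cosh_ne X))).const_mul a).const_add H0
  refine h.congr_deriv ?_
  have hc := cosh_ne X
  simp only [Pi.pow_apply, Pi.neg_apply, Pi.add_apply, Pi.div_apply]
  field_simp
  ring

lemma hF_A (X : ℝ) :
    HasDerivAt (fun Y => Real.sinh Y / Real.cosh Y ^ 3)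
      ((Real.cosh X ^ 2 - 3 * Real.sinh X ^ 2) / Real.cosh X ^ 4) X := by
  have h := (Real.hasDerivAt_sinh X).div ((Real.hasDerivAt_cosh X).pow 3)
    (pow_ne_zero 3 (cosh_ne X))
  refine h.congr_deriv ?_
  have hc := cosh_ne X
  simp only [Pi.pow_apply, Pi.neg_apply, Pi.add_apply, Pi.div_apply]
  field_simp
  ring

lemma hF_B (H0 a : ℝ) (hden : ∀ Y : ℝ, H0 * Real.cosh Y ^ 3 + a * Real.cosh Y ≠ 0) (X : ℝ) :
    HasDerivAt (fun Y => Real.sinh Y / (H0 * Real.cosh Y ^ 3 + a * Real.cosh Y))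
      ((Real.cosh X * (H0 * Real.cosh X ^ 3 + a * Real.cosh X)
          - Real.sinh X * (3 * H0 * Real.cosh X ^ 2 * Real.sinh X + a * Real.sinh X))
        / (H0 * Real.cosh X ^ 3 + a * Real.cosh X) ^ 2) X := by
  have h := (Real.hasDerivAt_sinh X).div
    ((((Real.hasDerivAt_cosh X).pow 3).const_mul H0).add
      ((Real.hasDerivAt_cosh X).const_mul a)) (hden X)
  refine h.congr_deriv ?_
  simp only [Pi.pow_apply, Pi.neg_apply, Pi.add_apply, Pi.div_apply]
  push_cast
  ring

set_option maxHeartbeats 2000000 in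
theorem solitary_wave_solution
    (g H0 l d zb0 : ℝ) (hg : 0 < g) (hH0 : 0 < H0) (hl : H0 < l) (hd : d ≠ 0)
    (c0 a : ℝ)
    (hc0 : c0 = l / d * Real.sqrt (g * H0 ^ 3 / (l ^ 2 - H0 ^ 2)))
    (ha : a = c0 ^ 2 * d ^ 2 / (g * l ^ 2))
    (H u w p : ℝ → ℝ → ℝ) (zb : ℝ → ℝ)
    (hzbdef : ∀ x, zb x = zb0)
    (hHdef : ∀ x t, H x t = H0 + a * (sech ((x - c0 * t) / l)) ^ 2)
    (hudef : ∀ x t, u x t = c0 * (1 - d / H x t))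
    (hwdef : ∀ x t, w x t = -(a * c0 * d / (l * H x t))
        * sech ((x - c0 * t) / l) * deriv sech ((x - c0 * t) / l))
    (hpdef : ∀ x t, p x t = a * c0 ^ 2 * d ^ 2 / (2 * l ^ 2 * (H x t) ^ 2)
        * ((2 * H0 - H x t) * (deriv sech ((x - c0 * t) / l)) ^ 2
          + H x t * sech ((x - c0 * t) / l)
            * deriv (deriv sech) ((x - c0 * t) / l))) :
    ∀ x t,
      (pdT H x t + pdX (fun x t => H x t * u x t) x t = 0) ∧
      (pdT (fun x t => H x t * u x t) x t
        + pdX (fun x t => H x t * (u x t) ^ 2 + g / 2 * (H x t) ^ 2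
            + H x t * p x t) x t = 0) ∧
      (pdT (fun x t => H x t * w x t) x t
        + pdX (fun x t => H x t * u x t * w x t) x t = 2 * p x t) ∧
      (pdT (fun x t => ((H x t + zb x) ^ 2 - (zb x) ^ 2) / 2) x t
        + pdX (fun x t => ((H x t + zb x) ^ 2 - (zb x) ^ 2) / 2 * u x t) x t
        = H x t * w x t) := by
  -- constants
  have hl0 : 0 < l := hH0.trans hl
  have hD : 0 < l ^ 2 - H0 ^ 2 := by nlinarith
  have hc2 : c0 ^ 2 * d ^ 2 = g * l ^ 2 * H0 ^ 3 / (l ^ 2 - H0 ^ 2) := by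
    rw [hc0, mul_pow, div_pow,
      Real.sq_sqrt (div_nonneg (by positivity) hD.le)]
    field_simp
  have hR2 : c0 ^ 2 * d ^ 2 = a * (g * l ^ 2) := by
    rw [ha]; field_simp
  have hR3 : a * (l ^ 2 - H0 ^ 2) = H0 ^ 3 := by
    have h : a * (g * l ^ 2) * (l ^ 2 - H0 ^ 2) = g * l ^ 2 * H0 ^ 3 := by
      rw [← hR2, hc2]; field_simp
    apply mul_left_cancel₀ (show (g * l ^ 2) ≠ 0 by positivity)
    linear_combination h
  have ha_pos : 0 < a := by nlinarith [pow_pos hH0 3]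
  have hR4 : c0 ^ 2 * d ^ 2 = g * (H0 ^ 3 + a * H0 ^ 2) := by
    linear_combination hR2 + g * hR3
  have hc2' : c0 ^ 2 = g * (H0 ^ 3 + a * H0 ^ 2) / d ^ 2 := by
    rw [eq_div_iff (pow_ne_zero 2 hd)]; exact hR4
  have hl2 : l ^ 2 = (H0 ^ 3 + a * H0 ^ 2) / a := by
    rw [eq_div_iff ha_pos.ne']; linear_combination hR3
  -- pointwise formulas
  have hHvpos : ∀ Y : ℝ, 0 < H0 + a * (Real.cosh Y ^ 2)⁻¹ := fun Y => by positivity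
  have hH' : ∀ y s : ℝ, H y s = H0 + a * (Real.cosh ((y - c0 * s) / l) ^ 2)⁻¹ :=
    fun y s => by rw [hHdef, sech_sq]
  have hHUfun : ∀ y s : ℝ,
      H y s * u y s = c0 * (H0 + a * (Real.cosh ((y - c0 * s) / l) ^ 2)⁻¹) - c0 * d := by
    intro y s
    have h1 := (hHvpos ((y - c0 * s) / l)).ne'
    rw [hudef, hH']
    field_simp
  have hHw : ∀ y s : ℝ, H y s * w y s
      = a * c0 * d / l * (Real.sinh ((y - c0 * s) / l) / Real.cosh ((y - c0 * s) / l) ^ 3) := by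
    intro y s
    have h1 := (hHvpos ((y - c0 * s) / l)).ne'
    have h2 := cosh_ne ((y - c0 * s) / l)
    rw [hwdef, hH', deriv_sech, sech_eq]
    field_simp
  have hden3 : ∀ Y : ℝ, H0 * Real.cosh Y ^ 3 + a * Real.cosh Y ≠ 0 := fun Y => by
    have := Real.cosh_pos Y; positivity
  have hHuw : ∀ y s : ℝ, H y s * u y s * w y s
      = a * c0 ^ 2 * d / l * (Real.sinh ((y - c0 * s) / l) / Real.cosh ((y - c0 * s) / l) ^ 3)
        - a * c0 ^ 2 * d ^ 2 / l * (Real.sinh ((y - c0 * s) / l)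
            / (H0 * Real.cosh ((y - c0 * s) / l) ^ 3 + a * Real.cosh ((y - c0 * s) / l))) := by
    intro y s
    have h1 := (hHvpos ((y - c0 * s) / l)).ne'
    have h2 := cosh_ne ((y - c0 * s) / l)
    have h3 := hden3 ((y - c0 * s) / l)
    rw [hudef, hwdef, hH', deriv_sech, sech_eq]
    field_simp
  have hE2fun : ∀ y s : ℝ,
      H y s * u y s ^ 2 + g / 2 * H y s ^ 2 + H y s * p y s
        = c0 ^ 2 * (H0 + a * (Real.cosh ((y - c0 * s) / l) ^ 2)⁻¹)
          + (g * H0 * (3 * H0 + 2 * a) / 2 - 2 * c0 ^ 2 * d) := by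
    intro y s
    have h1 := (hHvpos ((y - c0 * s) / l)).ne'
    have h2 := cosh_ne ((y - c0 * s) / l)
    have hsh2 : Real.sinh ((y - c0 * s) / l) ^ 2 = Real.cosh ((y - c0 * s) / l) ^ 2 - 1 := by
      have := Real.cosh_sq ((y - c0 * s) / l); linarith
    rw [hudef, hpdef, hH', deriv_sech, deriv2_sech, sech_eq, mul_pow,
      show ∀ A B : ℝ, (-A / B) ^ 2 = A ^ 2 / B ^ 2 from fun A B => by ring,
      hsh2, hc2', hl2]
    have hg' := hg.ne'
    have hH0' := hH0.ne'
    have ha' := ha_pos.ne'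
    field_simp
    ring
  intro x t
  set X := (x - c0 * t) / l with hXdef
  have hξx : HasDerivAt (fun y : ℝ => (y - c0 * t) / l) (1 / l) x := by
    simpa using ((hasDerivAt_id x).sub_const (c0 * t)).div_const l
  have hξt : HasDerivAt (fun s : ℝ => (x - c0 * s) / l) (-c0 / l) t := by
    have h : HasDerivAt (fun s : ℝ => x - c0 * s) (-c0) t := by
      simpa using ((hasDerivAt_id t).const_mul c0).const_sub x
    simpa using h.div_const l
  have dX : ∀ (F F' : ℝ → ℝ), (∀ Y, HasDerivAt F (F' Y) Y) →
      deriv (fun y => F ((y - c0 * t) / l)) x = F' X * (1 / l) :=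
    fun F F' hF => (HasDerivAt.comp x (hF X) hξx).deriv
  have dT : ∀ (F F' : ℝ → ℝ), (∀ Y, HasDerivAt F (F' Y) Y) →
      deriv (fun s => F ((x - c0 * s) / l)) t = F' X * (-c0 / l) :=
    fun F F' hF => (HasDerivAt.comp t (hF X) hξt).deriv
  have hch := cosh_ne X
  have hl' := hl0.ne'
  refine ⟨?_, ?_, ?_, ?_⟩
  · -- E1
    have T1 : pdT H x t = (-(2 * a * Real.sinh X) / Real.cosh X ^ 3) * (-c0 / l) := by
      show deriv (fun s => H x s) t = _
      have hfun : (fun s => H x s)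
          = fun s => (fun Y => H0 + a * (Real.cosh Y ^ 2)⁻¹) ((x - c0 * s) / l) := by
        funext s; exact hH' x s
      rw [hfun]; exact dT _ _ (hF_H H0 a)
    have X1 : pdX (fun x t => H x t * u x t) x t
        = (c0 * (-(2 * a * Real.sinh X) / Real.cosh X ^ 3)) * (1 / l) := by
      show deriv (fun y => H y t * u y t) x = _
      have hfun : (fun y => H y t * u y t)
          = fun y => (fun Y => c0 * (H0 + a * (Real.cosh Y ^ 2)⁻¹) - c0 * d) ((y - c0 * t) / l) := by
        funext y; exact hHUfun y t
      rw [hfun]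
      exact dX _ _ (fun Y => ((hF_H H0 a Y).const_mul c0).sub_const (c0 * d))
    rw [T1, X1]; ring
  · -- E2
    have T2 : pdT (fun x t => H x t * u x t) x t
        = (c0 * (-(2 * a * Real.sinh X) / Real.cosh X ^ 3)) * (-c0 / l) := by
      show deriv (fun s => H x s * u x s) t = _
      have hfun : (fun s => H x s * u x s)
          = fun s => (fun Y => c0 * (H0 + a * (Real.cosh Y ^ 2)⁻¹) - c0 * d) ((x - c0 * s) / l) := by
        funext s; exact hHUfun x s
      rw [hfun]
      exact dT _ _ (fun Y => ((hF_H H0 a Y).const_mul c0).sub_const (c0 * d))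
    have X2 : pdX (fun x t => H x t * u x t ^ 2 + g / 2 * H x t ^ 2 + H x t * p x t) x t
        = (c0 ^ 2 * (-(2 * a * Real.sinh X) / Real.cosh X ^ 3)) * (1 / l) := by
      show deriv (fun y => H y t * u y t ^ 2 + g / 2 * H y t ^ 2 + H y t * p y t) x = _
      have hfun : (fun y => H y t * u y t ^ 2 + g / 2 * H y t ^ 2 + H y t * p y t)
          = fun y => (fun Y => c0 ^ 2 * (H0 + a * (Real.cosh Y ^ 2)⁻¹)
              + (g * H0 * (3 * H0 + 2 * a) / 2 - 2 * c0 ^ 2 * d)) ((y - c0 * t) / l) := by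
        funext y; exact hE2fun y t
      rw [hfun]
      exact dX _ _ (fun Y => ((hF_H H0 a Y).const_mul (c0 ^ 2)).add_const _)
    rw [T2, X2]; ring
  · -- E3
    have T3 : pdT (fun x t => H x t * w x t) x t
        = (a * c0 * d / l * ((Real.cosh X ^ 2 - 3 * Real.sinh X ^ 2) / Real.cosh X ^ 4))
          * (-c0 / l) := by
      show deriv (fun s => H x s * w x s) t = _
      have hfun : (fun s => H x s * w x s)
          = fun s => (fun Y => a * c0 * d / l * (Real.sinh Y / Real.cosh Y ^ 3)) ((x - c0 * s) / l) := by
        funext s; exact hHw x s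
      rw [hfun]
      exact dT _ _ (fun Y => (hF_A Y).const_mul _)
    have X3 : pdX (fun x t => H x t * u x t * w x t) x t
        = (a * c0 ^ 2 * d / l * ((Real.cosh X ^ 2 - 3 * Real.sinh X ^ 2) / Real.cosh X ^ 4)
            - a * c0 ^ 2 * d ^ 2 / l *
              ((Real.cosh X * (H0 * Real.cosh X ^ 3 + a * Real.cosh X)
                - Real.sinh X * (3 * H0 * Real.cosh X ^ 2 * Real.sinh X + a * Real.sinh X))
              / (H0 * Real.cosh X ^ 3 + a * Real.cosh X) ^ 2)) * (1 / l) := by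
      show deriv (fun y => H y t * u y t * w y t) x = _
      have hfun : (fun y => H y t * u y t * w y t)
          = fun y => (fun Y => a * c0 ^ 2 * d / l * (Real.sinh Y / Real.cosh Y ^ 3)
              - a * c0 ^ 2 * d ^ 2 / l *
                (Real.sinh Y / (H0 * Real.cosh Y ^ 3 + a * Real.cosh Y))) ((y - c0 * t) / l) := by
        funext y; exact hHuw y t
      rw [hfun]
      exact dX _ _ (fun Y => ((hF_A Y).const_mul _).sub ((hF_B H0 a hden3 Y).const_mul _))
    rw [T3, X3, hpdef, hH', deriv_sech, deriv2_sech, sech_eq]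
    have h1 := (hHvpos X).ne'
    have h3 := hden3 X
    field_simp
    ring
  · -- E4
    have hF_Q : ∀ Y : ℝ, HasDerivAt
        (fun Y => (((H0 + a * (Real.cosh Y ^ 2)⁻¹) + zb0) ^ 2 - zb0 ^ 2) / 2)
        (((H0 + a * (Real.cosh Y ^ 2)⁻¹) + zb0)
          * (-(2 * a * Real.sinh Y) / Real.cosh Y ^ 3)) Y := by
      intro Y
      have h := ((((hF_H H0 a Y).add_const zb0).pow 2).sub_const (zb0 ^ 2)).div_const 2
      refine h.congr_deriv ?_
      push_cast
      ring
    have hF_Qu : ∀ Y : ℝ, HasDerivAt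
        (fun Y => c0 * ((((H0 + a * (Real.cosh Y ^ 2)⁻¹) + zb0) ^ 2 - zb0 ^ 2) / 2
          - d * ((H0 + a * (Real.cosh Y ^ 2)⁻¹) + 2 * zb0) / 2))
        (c0 * (((H0 + a * (Real.cosh Y ^ 2)⁻¹) + zb0)
            * (-(2 * a * Real.sinh Y) / Real.cosh Y ^ 3)
          - d * (-(2 * a * Real.sinh Y) / Real.cosh Y ^ 3) / 2)) Y := by
      intro Y
      have h := ((hF_Q Y).sub ((((hF_H H0 a Y).add_const (2 * zb0)).const_mul d).div_const 2)).const_mul c0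
      exact h
    have hQ' : ∀ y s : ℝ, ((H y s + zb y) ^ 2 - zb y ^ 2) / 2
        = (((H0 + a * (Real.cosh ((y - c0 * s) / l) ^ 2)⁻¹) + zb0) ^ 2 - zb0 ^ 2) / 2 := by
      intro y s; rw [hH', hzbdef]
    have hQu' : ∀ y s : ℝ, ((H y s + zb y) ^ 2 - zb y ^ 2) / 2 * u y s
        = c0 * ((((H0 + a * (Real.cosh ((y - c0 * s) / l) ^ 2)⁻¹) + zb0) ^ 2 - zb0 ^ 2) / 2
          - d * ((H0 + a * (Real.cosh ((y - c0 * s) / l) ^ 2)⁻¹) + 2 * zb0) / 2) := by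
      intro y s
      have h1 := (hHvpos ((y - c0 * s) / l)).ne'
      rw [hH', hudef, hH', hzbdef]
      field_simp
      ring
    have T4 : pdT (fun x t => ((H x t + zb x) ^ 2 - (zb x) ^ 2) / 2) x t
        = (((H0 + a * (Real.cosh X ^ 2)⁻¹) + zb0)
            * (-(2 * a * Real.sinh X) / Real.cosh X ^ 3)) * (-c0 / l) := by
      show deriv (fun s => ((H x s + zb x) ^ 2 - zb x ^ 2) / 2) t = _
      have hfun : (fun s => ((H x s + zb x) ^ 2 - zb x ^ 2) / 2)
          = fun s => (fun Y => (((H0 + a * (Real.cosh Y ^ 2)⁻¹) + zb0) ^ 2 - zb0 ^ 2) / 2)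
              ((x - c0 * s) / l) := by
        funext s; exact hQ' x s
      rw [hfun]
      exact dT _ _ hF_Q
    have X4 : pdX (fun x t => ((H x t + zb x) ^ 2 - (zb x) ^ 2) / 2 * u x t) x t
        = (c0 * (((H0 + a * (Real.cosh X ^ 2)⁻¹) + zb0)
            * (-(2 * a * Real.sinh X) / Real.cosh X ^ 3)
          - d * (-(2 * a * Real.sinh X) / Real.cosh X ^ 3) / 2)) * (1 / l) := by
      show deriv (fun y => ((H y t + zb y) ^ 2 - zb y ^ 2) / 2 * u y t) x = _
      have hfun : (fun y => ((H y t + zb y) ^ 2 - zb y ^ 2) / 2 * u y t)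
          = fun y => (fun Y => c0 * ((((H0 + a * (Real.cosh Y ^ 2)⁻¹) + zb0) ^ 2 - zb0 ^ 2) / 2
              - d * ((H0 + a * (Real.cosh Y ^ 2)⁻¹) + 2 * zb0) / 2)) ((y - c0 * t) / l) := by
        funext y; exact hQu' y t
      rw [hfun]
      exact dX _ _ hF_Qu
    rw [T4, X4, hHw]
    field_simp
    ring
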